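/- arXiv:2108.05990 — 2 statements merged into one kernel-verified Lean document; each statement's English description precedes it below -/
import Mathlib

section
/- Let g be the tooth function on [0,1] (g(x)=2x for x<1/2, g(x)=2(1-x) for x≥1/2), g_r its r-fold composition, and f_R(x) = x - Σ_{r=1}^{R} g_r(x)/2^{2r}. Then for every x∈[0,1], |f_R(x) - x²| ≤ 2^{-2R-2}. -/
/-- |f_R(x) - x²| ≤ 2^{-2R-2} for x ∈ [0,1], where f_R(x) = x - Σ_{r=1}^R g_r(x)/2^{2r}
and g_r is the r-fold iterate of the tooth function. -/
theorem approx_square (R : ℕ) (hR : 1 ≤ R) (g : ℝ → ℝ)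
    (hg1 : ∀ x, x < 1/2 → g x = 2 * x)
    (hg2 : ∀ x, 1/2 ≤ x → g x = 2 * (1 - x))
    (fR : ℝ → ℝ)
    (hfR : ∀ x, fR x = x - ∑ r ∈ Finset.Icc 1 R, g^[r] x / 2 ^ (2 * r)) :
    ∀ x ∈ Set.Icc (0:ℝ) 1, |fR x - x ^ 2| ≤ (2:ℝ) ^ (-(2 * (R:ℝ)) - 2) := by
  intro x hx
  have hmap : ∀ y : ℝ, y ∈ Set.Icc (0:ℝ) 1 → g y ∈ Set.Icc (0:ℝ) 1 := by
    intro y hy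
    obtain ⟨h0, h1⟩ := hy
    by_cases hc : y < 1/2
    · rw [hg1 y hc]; constructor <;> nlinarith
    · rw [hg2 y (le_of_not_gt hc)]; constructor <;> nlinarith [le_of_not_gt hc]
  have hiter : ∀ n, g^[n] x ∈ Set.Icc (0:ℝ) 1 := by
    intro n
    induction n with
    | zero => simpa using hx
    | succ n ih => rw [Function.iterate_succ_apply']; exact hmap _ ih
  have key : ∀ N : ℕ, x - ∑ r ∈ Finset.Icc 1 N, g^[r] x / 2 ^ (2 * r) - x ^ 2
      = (g^[N] x - (g^[N] x) ^ 2) / 2 ^ (2 * N) := by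
    intro N
    induction N with
    | zero => simp
    | succ N ih =>
      rw [Finset.sum_Icc_succ_top (by omega : 1 ≤ N + 1)]
      obtain ⟨hy0, hy1⟩ := hiter N
      rw [Function.iterate_succ_apply']
      set y := g^[N] x with hydef
      have hp : (0:ℝ) < 2 ^ (2 * N) := by positivity
      have h4 : (2:ℝ) ^ (2 * (N + 1)) = 4 * 2 ^ (2 * N) := by
        rw [show 2 * (N + 1) = 2 * N + 2 by ring, pow_add]; ring
      by_cases hc : y < 1/2
      · rw [hg1 y hc, h4]
        field_simp at ih ⊢
        all_goals nlinarith [ih, hp]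
      · rw [hg2 y (le_of_not_gt hc), h4]
        field_simp at ih ⊢
        all_goals nlinarith [ih, hp]
  have hz := hiter R
  obtain ⟨hz0, hz1⟩ := hz
  set z := g^[R] x with hzdef
  have hkey := key R
  rw [hfR x]
  rw [hkey]
  have he0 : 0 ≤ z - z ^ 2 := by nlinarith
  have he1 : z - z ^ 2 ≤ 1 / 4 := by nlinarith [sq_nonneg (z - 1/2)]
  have hp : (0:ℝ) < 2 ^ (2 * R) := by positivity
  have hrpow : (2:ℝ) ^ (-(2 * (R:ℝ)) - 2) = ((2:ℝ) ^ (2 * R + 2 : ℕ))⁻¹ := by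
    rw [show (-(2 * (R:ℝ)) - 2) = -((2 * R + 2 : ℕ) : ℝ) by push_cast; ring,
        Real.rpow_neg (by norm_num), Real.rpow_natCast]
  rw [hrpow, abs_div, abs_of_nonneg he0, abs_of_pos hp, pow_add]
  have h2 : ((2:ℝ) ^ (2 * R) * 2 ^ 2)⁻¹ = (1 / 4) / 2 ^ (2 * R) := by
    rw [eq_div_iff (ne_of_gt hp)]
    field_simp
    norm_num
  rw [h2]
  gcongr
end

section
/- For integers m ≥ 0 and d ≥ 1, Σ_{k=0}^{m} 2^k · C(d-1+k, d-1) = (-1)^d + 2^{m+1} Σ_{k=0}^{d-1} C(m+d, k) (-2)^{d-1-k}. -/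
open Finset

/-- Reindex the sum using the reflection j ↦ d-1-j and symmetry of binomials. -/
private lemma S_eq_U (m d : ℕ) (hd : 1 ≤ d) :
    ∑ k ∈ range d, ((m + d).choose k : ℤ) * (-2) ^ (d - 1 - k)
      = ∑ j ∈ range d, ((m + d).choose (m + 1 + j) : ℤ) * (-2) ^ j := by
  rw [← Finset.sum_range_reflect (fun k => ((m + d).choose k : ℤ) * (-2) ^ (d - 1 - k)) d]
  apply Finset.sum_congr rfl
  intro j hj
  simp only [mem_range] at hj
  have h1 : d - 1 - (d - 1 - j) = j := by omega
  have h2 : (m + d).choose (d - 1 - j) = (m + d).choose (m + 1 + j) := by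
    rw [← Nat.choose_symm (show d - 1 - j ≤ m + d by omega)]
    congr 1
    omega
  rw [h1, h2]

private lemma U_base (d : ℕ) (hd : 1 ≤ d) :
    (2:ℤ) * ∑ j ∈ range d, ((d).choose (0 + 1 + j) : ℤ) * (-2) ^ j = 1 - (-1) ^ d := by
  have hbin : ((-2 : ℤ) + 1) ^ d = ∑ k ∈ range (d + 1), (-2:ℤ) ^ k * 1 ^ (d - k) * (d.choose k) :=
    add_pow (-2 : ℤ) 1 d
  have h1 : ∑ k ∈ range (d + 1), (-2:ℤ) ^ k * 1 ^ (d - k) * (d.choose k)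
      = (∑ j ∈ range d, (-2:ℤ) ^ (j + 1) * (d.choose (j + 1))) + 1 := by
    rw [Finset.sum_range_succ']
    simp
  have h2 : ∑ j ∈ range d, (-2:ℤ) ^ (j + 1) * (d.choose (j + 1))
      = (-2) * ∑ j ∈ range d, ((d).choose (0 + 1 + j) : ℤ) * (-2) ^ j := by
    rw [Finset.mul_sum]
    apply Finset.sum_congr rfl
    intro j _
    have : 0 + 1 + j = j + 1 := by omega
    rw [this, pow_succ]
    ring
  have hne : ((-2 : ℤ) + 1) ^ d = (-1 : ℤ) ^ d := by norm_num
  rw [h1, h2] at hbin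
  rw [hne] at hbin
  linarith

private lemma U_step (m d : ℕ) :
    (2:ℤ) * ∑ j ∈ range d, ((m + 1 + d).choose (m + 1 + 1 + j) : ℤ) * (-2) ^ j
      = (∑ j ∈ range d, ((m + d).choose (m + 1 + j) : ℤ) * (-2) ^ j)
        + ((m + d).choose (m + 1) : ℤ) := by
  have pascal : ∀ j, ((m + 1 + d).choose (m + 1 + 1 + j) : ℤ)
      = ((m + d).choose (m + 1 + j) : ℤ) + ((m + d).choose (m + 2 + j) : ℤ) := by
    intro j
    have e1 : m + 1 + d = (m + d) + 1 := by omega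
    have e2 : m + 1 + 1 + j = (m + 1 + j) + 1 := by omega
    have e3 : m + 1 + j + 1 = m + 2 + j := by omega
    rw [e1, e2, Nat.choose_succ_succ, Nat.succ_eq_add_one, e3]
    push_cast
    ring
  have hsplit : ∑ j ∈ range d, ((m + 1 + d).choose (m + 1 + 1 + j) : ℤ) * (-2) ^ j
      = (∑ j ∈ range d, ((m + d).choose (m + 1 + j) : ℤ) * (-2) ^ j)
        + (∑ j ∈ range d, ((m + d).choose (m + 2 + j) : ℤ) * (-2) ^ j) := by
    rw [← Finset.sum_add_distrib]
    exact Finset.sum_congr rfl fun j _ => by rw [pascal]; ring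
  -- relate the shifted sum back
  have h1 : ∑ i ∈ range (d + 1), ((m + d).choose (m + 1 + i) : ℤ) * (-2) ^ i
      = (∑ j ∈ range d, ((m + d).choose (m + 2 + j) : ℤ) * (-2) ^ (j + 1))
        + ((m + d).choose (m + 1) : ℤ) := by
    rw [Finset.sum_range_succ']
    simp only [pow_zero, mul_one, add_zero]
    congr 1
    apply Finset.sum_congr rfl
    intro j _
    have : m + 1 + (j + 1) = m + 2 + j := by omega
    rw [this]
  have h2 : ∑ i ∈ range (d + 1), ((m + d).choose (m + 1 + i) : ℤ) * (-2) ^ i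
      = ∑ j ∈ range d, ((m + d).choose (m + 1 + j) : ℤ) * (-2) ^ j := by
    rw [Finset.sum_range_succ]
    have : (m + d).choose (m + 1 + d) = 0 := Nat.choose_eq_zero_of_lt (by omega)
    rw [this]
    simp
  have h3 : ∑ j ∈ range d, ((m + d).choose (m + 2 + j) : ℤ) * (-2) ^ (j + 1)
      = (-2) * ∑ j ∈ range d, ((m + d).choose (m + 2 + j) : ℤ) * (-2) ^ j := by
    rw [Finset.mul_sum]
    apply Finset.sum_congr rfl
    intro j _
    rw [pow_succ]
    ring
  rw [h2, h3] at h1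
  rw [hsplit]
  linarith

/-- Identity (3.62): Σ_{k=0}^m 2^k C(d-1+k,d-1) = (-1)^d + 2^{m+1} Σ_{k=0}^{d-1} C(m+d,k)(-2)^{d-1-k}. -/
theorem binom_geom_identity (m d : ℕ) (hd : 1 ≤ d) :
    ∑ k ∈ Finset.range (m + 1), (2:ℤ) ^ k * ((d - 1 + k).choose (d - 1) : ℤ) =
      (-1) ^ d + 2 ^ (m + 1) *
        ∑ k ∈ Finset.range d, ((m + d).choose k : ℤ) * (-2) ^ (d - 1 - k) := by
  induction m with
  | zero =>
    rw [S_eq_U 0 d hd]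
    have hb := U_base d hd
    have hd0 : (0 : ℕ) + d = d := by omega
    rw [hd0]
    simp only [Finset.sum_range_one, pow_zero, one_mul, add_zero, Nat.choose_self,
      Nat.cast_one, zero_add, pow_one]
    linarith
  | succ n ih =>
    rw [Finset.sum_range_succ, ih, S_eq_U n d hd, S_eq_U (n + 1) d hd]
    have hstep := U_step n d
    have hc : (d - 1 + (n + 1)).choose (d - 1) = (n + d).choose (n + 1) := by
      have e : d - 1 + (n + 1) = n + d := by omega
      rw [e, ← Nat.choose_symm (show d - 1 ≤ n + d by omega)]
      congr 1
      omega
    rw [hc]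
    have hp : (2:ℤ) ^ (n + 1 + 1) = 2 * 2 ^ (n + 1) := by ring
    rw [hp]
    linear_combination (-(2:ℤ) ^ (n + 1)) * hstep
end
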